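/- Let N be a ℤ[t]-submodule of a length-one ℤ[t]-module M of exponent 2ⁿ. Then the closure N̄ has colength one in M, and N̄ is contained in every colength-one submodule of M that contains N; thus N̄ is the unique smallest colength-one submodule of M containing N. -/

import Mathlib

/-- An `R`-module `M` has *length one* if there is a short exact sequence
`0 → F₁ → F₀ → M → 0` with `F₀`, `F₁` finitely generated free `R`-modules. -/
def IsLengthOne (R M : Type*) [CommRing R] [AddCommGroup M] [Module R M] : Prop :=
  ∃ (k l : ℕ) (f : (Fin k → R) →ₗ[R] (Fin l → R)) (g : (Fin l → R) →ₗ[R] M),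
    Function.Injective f ∧ Function.Surjective g ∧ LinearMap.range f = LinearMap.ker g

lemma prime_two_polyInt : Prime (2 : Polynomial ℤ) := by
  rw [show (2 : Polynomial ℤ) = Polynomial.C 2 by simp]
  exact Polynomial.prime_C_iff.mpr Int.prime_two

lemma span_two_isPrime : (Ideal.span {(2 : Polynomial ℤ)}).IsPrime :=
  (Ideal.span_singleton_prime (by norm_num)).mpr prime_two_polyInt

/-- The closure `N̄ = {x ∈ M : p • x ∈ N for some p ∈ ℤ[t] with p ∉ 2ℤ[t]}` of a
submodule `N` of a `ℤ[t]`-module `M`, as a submodule. -/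
def Submodule.polyClosure {M : Type*} [AddCommGroup M] [Module (Polynomial ℤ) M]
    (N : Submodule (Polynomial ℤ) M) : Submodule (Polynomial ℤ) M where
  carrier := {x | ∃ p : Polynomial ℤ, p ∉ Ideal.span {(2 : Polynomial ℤ)} ∧ p • x ∈ N}
  zero_mem' := by
    refine ⟨1, fun h => prime_two_polyInt.not_unit
      (isUnit_of_dvd_one (Ideal.mem_span_singleton.mp h)), by simpa using N.zero_mem⟩
  add_mem' := by
    rintro a b ⟨p, hp, hpa⟩ ⟨q, hq, hqb⟩
    refine ⟨p * q, fun h => ?_, ?_⟩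
    · rcases span_two_isPrime.mem_or_mem h with h' | h'
      · exact hp h'
      · exact hq h'
    · rw [smul_add]
      exact N.add_mem
        (by rw [mul_comm, mul_smul]; exact N.smul_mem q hpa)
        (by rw [mul_smul]; exact N.smul_mem p hqb)
  smul_mem' := by
    rintro r a ⟨p, hp, hpa⟩
    exact ⟨p, hp, by rw [smul_comm]; exact N.smul_mem r hpa⟩

local notation "Rp" => Polynomial ℤ

noncomputable section AuxiliaryLemmas

lemma two_not_dvd_of_not_mem {p : Rp} (hp : p ∉ Ideal.span {(2:Rp)}) : ¬ (2:Rp) ∣ p :=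
  fun h => hp (Ideal.mem_span_singleton.mpr h)

lemma no_odd_torsion {Q : Type*} [AddCommGroup Q] [Module Rp Q]
    (n : ℕ) (hexp : ∀ x : Q, (2 : Rp) ^ n • x = 0)
    (hQ : IsLengthOne Rp Q) {p : Rp} (hp : p ∉ Ideal.span {(2:Rp)})
    {q : Q} (hpq : p • q = 0) : q = 0 := by
  obtain ⟨k, l, f, g, hf, hg, hfg⟩ := hQ
  have h2n : ∀ y : Fin l → Rp, ∃ w, f w = (2:Rp)^n • y := by
    intro y
    have h0 : ((2:Rp)^n • y) ∈ LinearMap.ker g := by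
      rw [LinearMap.mem_ker, map_smul, hexp]
    rw [← hfg] at h0
    exact h0
  set bb := Pi.basisFun Rp (Fin l) with hbb
  choose B0 hB0 using fun i => h2n (bb i)
  set B : (Fin l → Rp) →ₗ[Rp] (Fin k → Rp) := bb.constr ℕ B0 with hB
  have hfB : ∀ y, f (B y) = (2:Rp)^n • y := by
    intro y
    have : f ∘ₗ B = (2:Rp)^n • LinearMap.id := by
      apply bb.ext
      intro i
      simp [hB, Module.Basis.constr_basis, hB0]
    calc f (B y) = (f ∘ₗ B) y := rfl
      _ = (2:Rp)^n • y := by rw [this]; rfl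
  obtain ⟨v, hv⟩ := hg q
  have hpv : p • v ∈ LinearMap.range f := by
    rw [hfg, LinearMap.mem_ker, map_smul, hv, hpq]
  obtain ⟨w, hw⟩ := hpv
  have key : p • B v = (2:Rp)^n • w := by
    apply hf
    simp only [map_smul, hfB, hw]
    rw [smul_comm]
  have hdvd : ∀ i, (2:Rp)^n ∣ B v i := by
    intro i
    have : p * B v i = (2:Rp)^n * w i := by
      have := congrFun key i
      simpa [mul_comm] using this
    exact prime_two_polyInt.pow_dvd_of_dvd_mul_left n (two_not_dvd_of_not_mem hp)
      ⟨w i, this⟩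
  choose u hu using hdvd
  have hfu : f u = v := by
    have h1 : f (B v) = (2:Rp)^n • v := hfB v
    have h2 : B v = (2:Rp)^n • u := by
      funext i; simpa [smul_eq_mul] using hu i
    rw [h2, map_smul] at h1
    funext i
    have := congrFun h1 i
    simp only [Pi.smul_apply, smul_eq_mul] at this
    exact mul_left_cancel₀ (pow_ne_zero n (two_ne_zero)) this
  have : v ∈ LinearMap.ker g := by rw [← hfg]; exact ⟨u, hfu⟩
  rw [← hv]; exact this


abbrev Lam : Type := Rp ⧸ Ideal.span {(2:Rp)}

instance : IsDomain Lam := by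
  haveI := span_two_isPrime
  infer_instance

lemma lam_pir : IsPrincipalIdealRing Lam := by
  have hker : RingHom.ker (Polynomial.mapRingHom (Int.castRingHom (ZMod 2)))
      = Ideal.span {(2:Rp)} := by
    rw [Polynomial.ker_mapRingHom, ZMod.ker_intCastRingHom, Ideal.map_span]
    simp
  have hsurj : Function.Surjective (Polynomial.mapRingHom (Int.castRingHom (ZMod 2))) :=
    Polynomial.map_surjective _ ZMod.intCast_surjective
  let e : Lam ≃+* Polynomial (ZMod 2) :=
    (Ideal.quotEquivOfEq hker.symm).trans
      (RingHom.quotientKerEquivOfSurjective hsurj)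
  exact IsPrincipalIdealRing.of_surjective e.symm.toRingHom e.symm.surjective

instance : IsPrincipalIdealRing Lam := lam_pir

set_option maxHeartbeats 1000000 in
lemma lemmaA (L : ℕ) (K : Submodule Rp (Fin L → Rp))
    (h2 : ∀ x : Fin L → Rp, (2:Rp) • x ∈ K)
    (hsat : ∀ p ∉ Ideal.span {(2:Rp)}, ∀ x : Fin L → Rp, p • x ∈ K → x ∈ K) :
    ∃ m : ℕ, Nonempty ((↥K × (Fin m → Rp)) ≃ₗ[Rp] ((Fin L → Rp) × (Fin m → Rp))) := by
  classical
  set Q := (Fin L → Rp) ⧸ K with hQ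
  have htor : Module.IsTorsionBy Rp Q 2 := by
    intro x
    obtain ⟨v, rfl⟩ := K.mkQ_surjective x
    rw [← map_smul, Submodule.mkQ_apply, Submodule.Quotient.mk_eq_zero]
    exact h2 v
  letI : Module Lam Q := htor.module
  haveI hTower : IsScalarTower Rp Lam Q :=
    Module.IsTorsionBySet.isScalarTower ((Module.isTorsionBySet_span_singleton_iff 2).mpr htor)
  haveI : Module.Finite Lam Q := Module.Finite.of_restrictScalars_finite Rp Lam Q
  haveI : NoZeroSMulDivisors Lam Q := by
    constructor
    intro c x hcx
    obtain ⟨p, rfl⟩ := Ideal.Quotient.mk_surjective c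
    by_cases hp : p ∈ Ideal.span {(2:Rp)}
    · left; exact Ideal.Quotient.eq_zero_iff_mem.mpr hp
    · right
      obtain ⟨v, rfl⟩ := K.mkQ_surjective x
      have : p • (K.mkQ v) = 0 := by
        rw [← hcx]
        exact (Module.IsTorsionBySet.mk_smul
          ((Module.isTorsionBySet_span_singleton_iff 2).mpr htor) p (K.mkQ v)).symm
      rw [← map_smul, Submodule.mkQ_apply, Submodule.Quotient.mk_eq_zero] at this
      rw [Submodule.mkQ_apply, Submodule.Quotient.mk_eq_zero]
      exact hsat p hp v this
  haveI : Module.Free Lam Q := Module.free_of_finite_type_torsion_free'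
  set ι := Module.Free.ChooseBasisIndex Lam Q with hι
  set b : Module.Basis ι Lam Q := Module.Free.chooseBasis Lam Q with hb
  set m := Fintype.card ι with hm
  set eQ : Q ≃ₗ[Lam] (Fin m → Lam) :=
    b.equivFun.trans (LinearEquiv.funCongrLeft Lam Lam (Fintype.equivFin ι).symm) with heQ
  -- now as Rp-linear
  set eQ' : Q ≃ₗ[Rp] (Fin m → Lam) := eQ.restrictScalars Rp with heQ'
  set h : (Fin L → Rp) →ₗ[Rp] (Fin m → Lam) := (eQ' : Q →ₗ[Rp] (Fin m → Lam)).comp K.mkQ with hh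
  have hker : ∀ x, h x = 0 ↔ x ∈ K := by
    intro x
    rw [hh]
    simp only [LinearMap.coe_comp, Function.comp_apply, LinearEquiv.coe_coe,
      EmbeddingLike.map_eq_zero_iff]
    rw [Submodule.mkQ_apply, Submodule.Quotient.mk_eq_zero]
  have hsurjh : Function.Surjective h := by
    intro y
    obtain ⟨x, hx⟩ := K.mkQ_surjective (eQ'.symm y)
    exact ⟨x, by simp [hh, hx]⟩
  -- reduction map
  set qm : (Fin m → Rp) →ₗ[Rp] (Fin m → Lam) :=
    LinearMap.pi (fun i => (Ideal.span {(2:Rp)}).mkQ.comp (LinearMap.proj i)) with hqm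
  have hqm_apply : ∀ (z : Fin m → Rp) (i : Fin m),
      qm z i = Submodule.Quotient.mk (z i) := fun z i => rfl
  have hqm_surj : Function.Surjective qm := by
    intro y
    have : ∀ i, ∃ r : Rp, Submodule.Quotient.mk r = y i := fun i =>
      (Ideal.span {(2:Rp)}).mkQ_surjective (y i)
    choose z hz using this
    exact ⟨z, funext fun i => hz i⟩
  have hqm_two : ∀ z : Fin m → Rp, qm ((2:Rp) • z) = 0 := by
    intro z
    funext i
    show (Ideal.span {(2:Rp)}).mkQ ((2:Rp) * z i) = 0
    rw [Submodule.mkQ_apply, Submodule.Quotient.mk_eq_zero]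
    exact Ideal.mul_mem_right _ _ (Ideal.subset_span rfl)
  have hqm_ker : ∀ z : Fin m → Rp, qm z = 0 → ∃ y, (2:Rp) • y = z := by
    intro z hz
    have : ∀ i, ∃ c : Rp, z i = 2 * c := by
      intro i
      have : (Ideal.span {(2:Rp)}).mkQ (z i) = 0 := congrFun hz i
      rw [Submodule.mkQ_apply, Submodule.Quotient.mk_eq_zero, Ideal.mem_span_singleton] at this
      exact this
    choose c hc using this
    exact ⟨c, funext fun i => (hc i).symm⟩
  -- lift of h
  set bL := Pi.basisFun Rp (Fin L) with hbL
  have : ∀ i : Fin L, ∃ w : Fin m → Rp, qm w = h (bL i) := fun i => hqm_surj (h (bL i))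
  choose Φ0 hΦ0 using this
  set Φ : (Fin L → Rp) →ₗ[Rp] (Fin m → Rp) := bL.constr ℕ Φ0 with hΦdef
  have hΦ : ∀ x, qm (Φ x) = h x := by
    have : qm.comp Φ = h := by
      apply bL.ext
      intro i
      simp [hΦdef, Module.Basis.constr_basis, hΦ0]
    intro x
    rw [← this]; rfl
  -- section of h
  set bm := Pi.basisFun Rp (Fin m) with hbm
  have : ∀ j : Fin m, ∃ s : Fin L → Rp, h s = qm (bm j) := fun j => hsurjh (qm (bm j))
  choose Sg0 hSg0 using this
  set Sgm : (Fin m → Rp) →ₗ[Rp] (Fin L → Rp) := bm.constr ℕ Sg0 with hSgdef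
  have hSg : ∀ z, h (Sgm z) = qm z := by
    have : h.comp Sgm = qm := by
      apply bm.ext
      intro j
      simp [hSgdef, Module.Basis.constr_basis, hSg0]
    intro z
    rw [← this]; rfl
  -- the map F
  set G2 : ((Fin L → Rp) × (Fin m → Rp)) →ₗ[Rp] (Fin m → Rp) :=
    Φ.comp (LinearMap.fst Rp _ _) + (2:Rp) • LinearMap.snd Rp _ _ with hG2
  have hG2_apply : ∀ z : (Fin L → Rp) × (Fin m → Rp), G2 z = Φ z.1 + (2:Rp) • z.2 :=
    fun z => rfl
  set G1 : ((Fin L → Rp) × (Fin m → Rp)) →ₗ[Rp] (Fin L → Rp) :=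
    LinearMap.fst Rp _ _ - Sgm.comp G2 with hG1
  have hG1mem : ∀ z, G1 z ∈ K := by
    intro z
    rw [← hker]
    have : h (G1 z) = h z.1 - qm (G2 z) := by
      rw [hG1]; simp only [LinearMap.sub_apply, LinearMap.coe_comp, Function.comp_apply,
        LinearMap.fst_apply, map_sub, hSg]
    rw [this, hG2_apply, map_add, hΦ, hqm_two]
    simp
  set F : ((Fin L → Rp) × (Fin m → Rp)) →ₗ[Rp] (↥K × (Fin m → Rp)) :=
    LinearMap.prod (G1.codRestrict K hG1mem) G2 with hF
  have hFinj : Function.Injective F := by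
    rw [← LinearMap.ker_eq_bot]
    rw [Submodule.eq_bot_iff]
    rintro ⟨x, y⟩ hz
    rw [LinearMap.mem_ker] at hz
    have h2' : G2 (x, y) = 0 := congrArg Prod.snd hz
    have h1 : G1 (x, y) = 0 := congrArg (fun w : (↥K × (Fin m → Rp)) => (w.1 : Fin L → Rp)) hz
    rw [hG1] at h1
    simp only [LinearMap.sub_apply, LinearMap.coe_comp, Function.comp_apply,
      LinearMap.fst_apply, h2', map_zero, sub_zero] at h1
    -- h1 : x = 0
    have hy : (2:Rp) • y = 0 := by
      have := hG2_apply (x, y)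
      rw [h2', h1] at this
      simpa using this.symm
    have : y = 0 := by
      funext i
      have := congrFun hy i
      simp only [Pi.smul_apply, smul_eq_mul, Pi.zero_apply] at this
      exact (mul_eq_zero.mp this).resolve_left two_ne_zero
    simp [Prod.ext_iff, h1, this]
  have hFsurj : Function.Surjective F := by
    rintro ⟨⟨k, hk⟩, z⟩
    set x := k + Sgm z with hx
    have hqz : qm (z - Φ x) = 0 := by
      rw [map_sub, hΦ, hx, map_add, hSg]
      rw [(hker k).mpr hk]
      simp
    obtain ⟨y, hy⟩ := hqm_ker _ hqz
    refine ⟨(x, y), ?_⟩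
    have hG2xy : G2 (x, y) = z := by
      rw [hG2_apply, hy]; simp
    refine Prod.ext (Subtype.ext ?_) hG2xy
    show G1 (x, y) = k
    rw [hG1]
    simp only [LinearMap.sub_apply, LinearMap.coe_comp, Function.comp_apply, LinearMap.fst_apply,
      hG2xy, hx]
    rw [← hx, hG2xy, hx]
    abel
  exact ⟨m, ⟨(LinearEquiv.ofBijective F ⟨hFinj, hFsurj⟩).symm⟩⟩




lemma one_notin_span_two : (1:Rp) ∉ Ideal.span {(2:Rp)} := fun h =>
  prime_two_polyInt.not_unit (isUnit_of_dvd_one (Ideal.mem_span_singleton.mp h))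

lemma memClosureIff {M : Type*} [AddCommGroup M] [Module Rp M]
    (N : Submodule Rp M) (x : M) :
    x ∈ N.polyClosure ↔ ∃ p : Rp, p ∉ Ideal.span {(2:Rp)} ∧ p • x ∈ N := Iff.rfl

lemma closure_sat {M : Type*} [AddCommGroup M] [Module Rp M]
    (N : Submodule Rp M) {p : Rp} (hp : p ∉ Ideal.span {(2:Rp)}) {x : M}
    (hx : p • x ∈ N.polyClosure) : x ∈ N.polyClosure := by
  obtain ⟨q, hq, hqx⟩ := hx
  refine ⟨q * p, fun h => ?_, ?_⟩
  · rcases span_two_isPrime.mem_or_mem h with h' | h'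
    · exact hq h'
    · exact hp h'
  · rw [mul_smul]; exact hqx

def subProdEquiv {M N : Type*} [AddCommGroup M] [AddCommGroup N]
    [Module Rp M] [Module Rp N] (p : Submodule Rp M) (q : Submodule Rp N) :
    ↥(p.prod q) ≃ₗ[Rp] ↥p × ↥q where
  toFun x := (⟨(x : M × N).1, x.2.1⟩, ⟨(x : M × N).2, x.2.2⟩)
  invFun y := ⟨((y.1 : M), (y.2 : N)), ⟨y.1.2, y.2.2⟩⟩
  left_inv x := rfl
  right_inv y := rfl
  map_add' x y := rfl
  map_smul' c x := rfl

def rho (L m : ℕ) : ((Fin L → Rp) × (Fin m → Rp)) ≃ₗ[Rp] (Fin (L+m) → Rp) :=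
  ((LinearEquiv.sumArrowLequivProdArrow (Fin L) (Fin m) Rp Rp).symm).trans
    (LinearEquiv.funCongrLeft Rp Rp finSumFinEquiv.symm)


lemma lemmaT : ∀ (n L : ℕ) (K : Submodule Rp (Fin L → Rp)),
    (∀ x : Fin L → Rp, (2:Rp)^n • x ∈ K) →
    (∀ p ∉ Ideal.span {(2:Rp)}, ∀ x : Fin L → Rp, p • x ∈ K → x ∈ K) →
    ∃ m : ℕ, Nonempty ((↥K × (Fin m → Rp)) ≃ₗ[Rp] (Fin (L+m) → Rp)) := by
  intro n
  induction n with
  | zero =>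
    intro L K h2 _
    have hKtop : K = ⊤ := eq_top_iff.mpr (fun x _ => by simpa using h2 x)
    refine ⟨0, ⟨?_⟩⟩
    exact (LinearEquiv.prodCongr ((LinearEquiv.ofEq K ⊤ hKtop).trans Submodule.topEquiv)
      (LinearEquiv.refl Rp (Fin 0 → Rp))).trans (rho L 0)
  | succ n ih =>
    intro L K h2 hsat
    set Ln : Submodule Rp (Fin L → Rp) :=
      LinearMap.range (((2:Rp)^n) • (LinearMap.id : (Fin L → Rp) →ₗ[Rp] (Fin L → Rp))) with hLn
    set K' := Submodule.polyClosure (K ⊔ Ln) with hK'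
    have hmemLn : ∀ x : Fin L → Rp, (2:Rp)^n • x ∈ Ln := fun x => ⟨x, rfl⟩
    have hK'2n : ∀ x : Fin L → Rp, (2:Rp)^n • x ∈ K' := by
      intro x
      exact ⟨1, one_notin_span_two, by simpa using Submodule.mem_sup_right (hmemLn x)⟩
    have hK'sat : ∀ p ∉ Ideal.span {(2:Rp)}, ∀ x : Fin L → Rp, p • x ∈ K' → x ∈ K' :=
      fun p hp x hx => closure_sat _ hp hx
    have hKK' : K ≤ K' := fun x hx =>
      ⟨1, one_notin_span_two, by simpa using Submodule.mem_sup_left hx⟩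
    have h2K' : ∀ x ∈ K', (2:Rp) • x ∈ K := by
      intro x hx
      obtain ⟨p, hp, hpx⟩ := hx
      obtain ⟨y, hy, z, hz, hyz⟩ := Submodule.mem_sup.mp hpx
      obtain ⟨w, hw⟩ := hz
      refine hsat p hp _ ?_
      have : p • ((2:Rp) • x) = (2:Rp) • y + (2:Rp)^(n+1) • w := by
        rw [smul_comm p, ← hyz, smul_add, ← hw]
        simp only [LinearMap.smul_apply, LinearMap.id_apply]
        rw [smul_comm ((2:Rp)) ((2:Rp)^n) w, ← mul_smul, ← pow_succ]
      rw [this]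
      exact K.add_mem (K.smul_mem _ hy) (h2 w)
    obtain ⟨m, ⟨θ⟩⟩ := ih L K' hK'2n hK'sat
    set K0 : Submodule Rp ↥K' := K.comap K'.subtype with hK0
    set Kprod : Submodule Rp (↥K' × (Fin m → Rp)) := K0.prod ⊤ with hKprod
    set J : Submodule Rp (Fin (L+m) → Rp) := Kprod.map (θ : _ →ₗ[Rp] _) with hJ
    have hJ2 : ∀ x : Fin (L+m) → Rp, (2:Rp) • x ∈ J := by
      intro x
      obtain ⟨ab, hab⟩ := θ.surjective x
      refine ⟨(2:Rp) • ab, ⟨?_, ?_⟩, by simp only [LinearEquiv.coe_coe, map_smul, hab]⟩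
      · exact h2K' _ ab.1.2
      · trivial
    have hJsat : ∀ p ∉ Ideal.span {(2:Rp)}, ∀ x : Fin (L+m) → Rp, p • x ∈ J → x ∈ J := by
      intro p hp x hx
      obtain ⟨ab, hab⟩ := θ.surjective x
      obtain ⟨w, hw, hwx⟩ := hx
      simp only [LinearEquiv.coe_coe] at hwx
      have hweq : w = p • ab := θ.injective (by rw [hwx, map_smul, hab])
      rw [hweq] at hw
      refine ⟨ab, ⟨?_, trivial⟩, by simp only [LinearEquiv.coe_coe]; exact hab⟩
      have h1 : p • (ab.1 : Fin L → Rp) ∈ K := hw.1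
      exact hsat p hp _ h1
    obtain ⟨m', ⟨ψ⟩⟩ := lemmaA (L+m) J hJ2 hJsat
    refine ⟨m + m', ⟨?_⟩⟩
    have e3 : (↥K × (Fin m → Rp)) ≃ₗ[Rp] ↥J :=
      (LinearEquiv.prodCongr (Submodule.comapSubtypeEquivOfLe hKK').symm
        (Submodule.topEquiv (R := Rp) (M := Fin m → Rp)).symm).trans
        ((subProdEquiv K0 ⊤).symm.trans
          (Submodule.equivMapOfInjective θ.toLinearMap θ.injective Kprod))
    exact (LinearEquiv.prodCongr (LinearEquiv.refl Rp ↥K) (rho m m').symm).trans <|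
      ((LinearEquiv.prodAssoc Rp ↥K (Fin m → Rp) (Fin m' → Rp)).symm).trans <|
      (LinearEquiv.prodCongr e3 (LinearEquiv.refl Rp (Fin m' → Rp))).trans <|
      ψ.trans <|
      (rho (L+m) m').trans <|
      LinearEquiv.funCongrLeft Rp Rp (finCongr (add_assoc L m m')).symm


end AuxiliaryLemmas

/-- Let `N` be a `ℤ[t]`-submodule of a length-one `ℤ[t]`-module `M` of exponent `2ⁿ`.
Then the closure `N̄` contains `N`, has colength one in `M`, and is contained in every
colength-one submodule of `M` containing `N`; thus `N̄` is the unique smallest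
colength-one submodule of `M` containing `N`. -/
theorem closure_smallest_colengthOne
    (M : Type) [AddCommGroup M] [Module (Polynomial ℤ) M]
    (n : ℕ) (hexp : ∀ x : M, (2 : Polynomial ℤ) ^ n • x = 0)
    (hM : IsLengthOne (Polynomial ℤ) M)
    (N : Submodule (Polynomial ℤ) M) :
    N ≤ N.polyClosure ∧
    IsLengthOne (Polynomial ℤ) (M ⧸ N.polyClosure) ∧
    ∀ P : Submodule (Polynomial ℤ) M, N ≤ P →
      IsLengthOne (Polynomial ℤ) (M ⧸ P) → N.polyClosure ≤ P := by
  refine ⟨?_, ?_, ?_⟩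
  · intro x hx
    exact ⟨1, one_notin_span_two, by simpa using hx⟩
  · obtain ⟨k, l, f, g, hf, hg, hfg⟩ := hM
    set Nb := N.polyClosure with hNb
    set Nt : Submodule Rp (Fin l → Rp) := Nb.comap g with hNt
    have h2n : ∀ x : Fin l → Rp, (2:Rp)^n • x ∈ Nt := by
      intro x
      show g ((2:Rp)^n • x) ∈ Nb
      rw [map_smul, hexp]
      exact Nb.zero_mem
    have hsat : ∀ p ∉ Ideal.span {(2:Rp)}, ∀ x : Fin l → Rp, p • x ∈ Nt → x ∈ Nt := by
      intro p hp x hx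
      have hgx : p • g x ∈ Nb := by rw [← map_smul]; exact hx
      exact closure_sat N hp hgx
    obtain ⟨m, ⟨θ⟩⟩ := lemmaT n l Nt h2n hsat
    set ρ := rho l m with hρ
    set c : (Fin l → Rp) →ₗ[Rp] (M ⧸ Nb) := Nb.mkQ.comp g with hc
    set gbig : (Fin (l+m) → Rp) →ₗ[Rp] (M ⧸ Nb) :=
      c.comp ((LinearMap.fst Rp (Fin l → Rp) (Fin m → Rp)).comp
        (ρ.symm : _ →ₗ[Rp] _)) with hgbig
    set incl : (↥Nt × (Fin m → Rp)) →ₗ[Rp] ((Fin l → Rp) × (Fin m → Rp)) :=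
      (Nt.subtype).prodMap (LinearMap.id) with hincl
    set fbig : (Fin (l+m) → Rp) →ₗ[Rp] (Fin (l+m) → Rp) :=
      (ρ : _ →ₗ[Rp] _).comp (incl.comp (θ.symm : _ →ₗ[Rp] _)) with hfbig
    have hfbig_apply : ∀ w, fbig w = ρ (incl (θ.symm w)) := fun w => rfl
    have hgbig_apply : ∀ x, gbig x = Submodule.Quotient.mk (g ((ρ.symm x).1)) := fun x => rfl
    have hincl_apply : ∀ u : ↥Nt × (Fin m → Rp), incl u = ((u.1 : Fin l → Rp), u.2) :=
      fun u => rfl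
    have hinclinj : Function.Injective incl := by
      rintro ⟨a1, a2⟩ ⟨b1, b2⟩ h
      rw [hincl_apply, hincl_apply, Prod.ext_iff] at h
      rw [Prod.ext_iff]
      exact ⟨Subtype.ext h.1, h.2⟩
    refine ⟨l+m, l+m, fbig, gbig, ?_, ?_, ?_⟩
    · have : ⇑fbig = ⇑ρ ∘ ⇑incl ∘ ⇑θ.symm := rfl
      rw [this]
      exact ρ.injective.comp (hinclinj.comp θ.symm.injective)
    · intro y
      obtain ⟨z, rfl⟩ := Nb.mkQ_surjective y
      obtain ⟨v, hv⟩ := hg z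
      refine ⟨ρ (v, 0), ?_⟩
      rw [hgbig_apply, LinearEquiv.symm_apply_apply, hv]
      rfl
    · apply le_antisymm
      · rintro x ⟨w, rfl⟩
        rw [LinearMap.mem_ker, hgbig_apply, hfbig_apply, LinearEquiv.symm_apply_apply,
          hincl_apply, Submodule.Quotient.mk_eq_zero]
        exact (θ.symm w).1.2
      · intro x hx
        rw [LinearMap.mem_ker, hgbig_apply, Submodule.Quotient.mk_eq_zero] at hx
        refine ⟨θ ((⟨(ρ.symm x).1, hx⟩ : ↥Nt), (ρ.symm x).2), ?_⟩
        rw [hfbig_apply, LinearEquiv.symm_apply_apply, hincl_apply]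
        show ρ ((ρ.symm x).1, (ρ.symm x).2) = x
        rw [Prod.mk.eta, LinearEquiv.apply_symm_apply]
  · intro P hNP hP x hx
    obtain ⟨p, hp, hpx⟩ := hx
    have h2exp : ∀ y : M ⧸ P, (2:Rp)^n • y = 0 := by
      intro y; obtain ⟨z, rfl⟩ := P.mkQ_surjective y
      rw [← map_smul, hexp, map_zero]
    have hpq : p • (P.mkQ x) = 0 := by
      rw [← map_smul, Submodule.mkQ_apply, Submodule.Quotient.mk_eq_zero]
      exact hNP hpx
    have hz := no_odd_torsion n h2exp hP hp hpq
    rwa [Submodule.mkQ_apply, Submodule.Quotient.mk_eq_zero] at hz
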